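/- arXiv:1112.5066 — 4 statements merged into one kernel-verified Lean document; each statement's English description precedes it below -/
import Mathlib

section
/- Let V be a real vector space, e : V → ℝ a linear functional, X a finite index set, and (A_i)_{i∈X} a family of linear maps V → V satisfying the repeatability condition A_i ∘ A_j = δ_{ij} A_i for all i, j ∈ X. Let ρ ∈ V and suppose e(A_i ρ) ≠ 0 for every i ∈ X. Define the states ρ_i := e(A_i ρ)⁻¹ • (A_i ρ) and the effects a_i := e ∘ A_i. Then a_j(ρ_i) = δ_{ij} for all i, j ∈ X, i.e. the states (ρ_i) are perfectly distinguishable by the observation-test (a_i). -/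
/-- Lemma 2 of the paper. In a causal probabilistic theory, if a
repeatable test `(A i)` (i.e. `A i ∘ A j = δ_{ij} A i`) is applied to a state `ρ` with
`e (A i ρ) ≠ 0` for all `i`, then the conditional states `ρ_i := e (A i ρ)⁻¹ • A i ρ`
are perfectly distinguishable by the effects `a_i := e ∘ A i`. -/
theorem objective_info_gives_distinguishable_states
    {V : Type*} [AddCommGroup V] [Module ℝ V]
    (e : V →ₗ[ℝ] ℝ)
    {X : Type*} [Fintype X] [DecidableEq X]
    (A : X → (V →ₗ[ℝ] V))
    (hrep : ∀ i j, (A i) ∘ₗ (A j) = if i = j then A i else 0)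
    (ρ : V) (hne : ∀ i, e (A i ρ) ≠ 0) :
    ∀ i j, (e ∘ₗ A j) ((e (A i ρ))⁻¹ • (A i ρ)) = if i = j then 1 else 0 := by
  intro i j
  have h := congrArg (fun f => f ρ) (hrep j i)
  simp only [LinearMap.comp_apply] at h ⊢
  simp only [map_smul, smul_eq_mul]
  by_cases hij : i = j
  · subst hij
    simp only [if_true, eq_self_iff_true] at h ⊢
    rw [h, inv_mul_cancel₀ (hne i)]
  · rw [if_neg (Ne.symm hij)] at h
    rw [if_neg hij, h]
    simp
end

section
/- Let V_A and V_B be finite-dimensional real vector spaces, S_A ⊆ V_A and S_B ⊆ V_B convex sets, and e_A : V_A → ℝ, e_B : V_B → ℝ linear functionals equal to 1 on S_A and S_B respectively. Let ρ = ∑_{j∈Y} p_j (ρ_j ⊗ τ_j) ∈ V_A ⊗ V_B be separable, with Y finite, (p_j) a probability distribution, ρ_j ∈ S_A, τ_j ∈ S_B. Let X be a finite index set and (A_k)_{k∈X} a family of linear maps V_A → V_A such that: (i) A_k maps the cone {t • σ : t ≥ 0, σ ∈ S_A} into itself; (ii) A_k ∘ A_{k'} = δ_{kk'} A_k; (iii)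 for the marginal ν := ∑_{j∈Y} p_j ρ_j one has A_k ν = q_k • ψ_k where q_k > 0 and ψ_k is an extreme point of S_A, and (∑_{k∈X} A_k) ν = ν; (iv) ∑_{k∈X} (A_k ⊗ id_{V_B}) ρ = ρ. Then there exist states σ_k ∈ S_B such that ρ = ∑_{k∈X} q_k • (ψ_k ⊗ σ_k), where the pure states (ψ_k) are perfectly distinguishable by the effects a_k := e_A ∘ A_k, i.e. a_k(ψ_{k'}) = δ_{kk'}. -/
open scoped TensorProduct

/-- An extreme point of a convex set which is written as a finite convex combination of
points of the set must equal every point appearing with positive weight. -/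
lemma extreme_eq_of_convex_sum {V : Type*} [AddCommGroup V] [Module ℝ V]
    {S : Set V} (hS : Convex ℝ S) {ψ₀ : V} (hψ₀ : ψ₀ ∈ S.extremePoints ℝ)
    {ι : Type*} [Fintype ι] [DecidableEq ι] (w : ι → ℝ) (x : ι → V)
    (hw0 : ∀ j, 0 ≤ w j) (hw1 : ∑ j, w j = 1)
    (hx : ∀ j, x j ∈ S) (hsum : ∑ j, w j • x j = ψ₀) :
    ∀ j, 0 < w j → x j = ψ₀ := by
  intro j hj
  by_contra hne
  obtain ⟨hmem, hext⟩ := hψ₀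
  have hsplitw : w j + ∑ i ∈ Finset.univ.erase j, w i = 1 := by
    rw [Finset.add_sum_erase _ _ (Finset.mem_univ j)]; exact hw1
  have hsplit : w j • x j + ∑ i ∈ Finset.univ.erase j, w i • x i = ψ₀ :=
    (Finset.add_sum_erase Finset.univ (fun i => w i • x i) (Finset.mem_univ j)).trans hsum
  have hwle : w j ≤ 1 := by
    have h0 : (0:ℝ) ≤ ∑ i ∈ Finset.univ.erase j, w i :=
      Finset.sum_nonneg fun i _ => hw0 i
    linarith
  rcases eq_or_lt_of_le hwle with h1 | h1
  · -- w j = 1 : all other weights vanish, so ψ₀ = x j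
    have hz : ∑ i ∈ Finset.univ.erase j, w i = 0 := by linarith
    have hz' : ∀ i ∈ Finset.univ.erase j, w i = 0 :=
      (Finset.sum_eq_zero_iff_of_nonneg fun i _ => hw0 i).1 hz
    have : ψ₀ = x j := by
      rw [← hsplit, h1, one_smul, Finset.sum_eq_zero fun i hi => by
        rw [hz' i hi, zero_smul], add_zero]
    exact hne this.symm
  · -- 0 < w j < 1 : ψ₀ lies in the open segment from x j to the rest
    set c : ℝ := 1 - w j with hc
    have hcpos : 0 < c := by simp only [hc]; linarith
    set y : V := ∑ i ∈ Finset.univ.erase j, (w i / c) • x i with hy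
    have hyS : y ∈ S := by
      refine hS.sum_mem (fun i _ => div_nonneg (hw0 i) hcpos.le) ?_ (fun i _ => hx i)
      rw [← Finset.sum_div]
      field_simp
      linarith
    have hcy : c • y = ∑ i ∈ Finset.univ.erase j, w i • x i := by
      rw [hy, Finset.smul_sum]
      refine Finset.sum_congr rfl fun i _ => ?_
      rw [smul_smul, mul_div_cancel₀ _ hcpos.ne']
    have hseg : ψ₀ ∈ openSegment ℝ (x j) y := by
      exact ⟨w j, c, hj, hcpos, by simp [hc], by rw [hcy]; exact hsplit⟩
    exact hne (hext (hx j) hyS hseg)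

/-- structure theorem for null discord states, Theorem 4 of the
paper. Let `ρ = ∑ j, p j • (ρJ j ⊗ τ j)` be a separable bipartite state, and let
`(A k)` be a test on system `A` mapping the cone of unnormalized states into itself,
repeatable, providing complete objective information about the marginal
`ν = ∑ j, p j • ρJ j` (i.e. `A k ν = q k • ψ k` with `q k > 0`, `ψ k` pure, and
`(∑ k, A k) ν = ν`), and such that `(A k ⊗ id)` provides objective information on `ρ`.
Then `ρ = ∑ k, q k • (ψ k ⊗ σ k)` for some states `σ k ∈ S_B`, with the pure states
`ψ k` perfectly distinguishable by the effects `a k := e_A ∘ A k`. -/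
theorem null_discord_structure
    {VA VB : Type*}
    [AddCommGroup VA] [Module ℝ VA] [FiniteDimensional ℝ VA]
    [AddCommGroup VB] [Module ℝ VB] [FiniteDimensional ℝ VB]
    (SA : Set VA) (hSA : Convex ℝ SA)
    (SB : Set VB) (hSB : Convex ℝ SB)
    (eA : VA →ₗ[ℝ] ℝ) (heA : ∀ σ ∈ SA, eA σ = 1)
    (eB : VB →ₗ[ℝ] ℝ) (heB : ∀ σ ∈ SB, eB σ = 1)
    {Y : Type*} [Fintype Y]
    (p : Y → ℝ) (hp0 : ∀ j, 0 ≤ p j) (hp1 : ∑ j, p j = 1)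
    (ρJ : Y → VA) (hρJ : ∀ j, ρJ j ∈ SA)
    (τ : Y → VB) (hτ : ∀ j, τ j ∈ SB)
    {X : Type*} [Fintype X] [DecidableEq X]
    (A : X → (VA →ₗ[ℝ] VA))
    (hcone : ∀ k, ∀ v : VA, (∃ t : ℝ, 0 ≤ t ∧ ∃ s ∈ SA, v = t • s) →
      ∃ t : ℝ, 0 ≤ t ∧ ∃ s ∈ SA, A k v = t • s)
    (hrep : ∀ k k', (A k) ∘ₗ (A k') = if k = k' then A k else 0)
    (q : X → ℝ) (hq : ∀ k, 0 < q k)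
    (ψ : X → VA) (hψ : ∀ k, ψ k ∈ SA.extremePoints ℝ)
    (hmarg : ∀ k, A k (∑ j, p j • ρJ j) = q k • ψ k)
    (hnondist : (∑ k, A k) (∑ j, p j • ρJ j) = ∑ j, p j • ρJ j)
    (hnondistAB :
      ∑ k, TensorProduct.map (A k) LinearMap.id (∑ j, p j • (ρJ j ⊗ₜ[ℝ] τ j))
        = ∑ j, p j • (ρJ j ⊗ₜ[ℝ] τ j)) :
    ∃ σ : X → VB, (∀ k, σ k ∈ SB) ∧
      (∑ j, p j • (ρJ j ⊗ₜ[ℝ] τ j)) = ∑ k, q k • (ψ k ⊗ₜ[ℝ] σ k) ∧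
      ∀ k k', (eA ∘ₗ A k) (ψ k') = if k = k' then 1 else 0 := by
  classical
  -- choose the cone decompositions of `A k (ρJ j)`
  have hcone' : ∀ k j, ∃ t : ℝ, 0 ≤ t ∧ ∃ s ∈ SA, A k (ρJ j) = t • s :=
    fun k j => hcone k (ρJ j) ⟨1, zero_le_one, ρJ j, hρJ j, (one_smul ℝ _).symm⟩
  choose t ht0 s hsS hAe using hcone'
  set ν : VA := ∑ j, p j • ρJ j with hν
  have hAν : ∀ k, ∑ j, (p j * t k j) • s k j = q k • ψ k := by
    intro k
    have h1 : A k ν = ∑ j, p j • A k (ρJ j) := by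
      rw [hν, map_sum]; exact Finset.sum_congr rfl fun j _ => map_smul _ _ _
    calc ∑ j, (p j * t k j) • s k j = ∑ j, p j • A k (ρJ j) :=
          Finset.sum_congr rfl fun j _ => by rw [hAe, mul_smul]
      _ = A k ν := h1.symm
      _ = q k • ψ k := hmarg k
  -- the weights `p j * t k j` sum to `q k`
  have hsumt : ∀ k, ∑ j, p j * t k j = q k := by
    intro k
    have := congrArg eA (hAν k)
    simpa [map_sum, heA _ (hsS _ _), heA _ (hψ k).1, map_smul, smul_eq_mul] using this
  -- the key consequence of extremality of `ψ k`
  have key : ∀ k j, p j • A k (ρJ j) = (p j * t k j) • ψ k := by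
    intro k j
    rcases (mul_nonneg (hp0 j) (ht0 k j)).lt_or_eq with hpos | hzero
    · have hw0 : ∀ i, 0 ≤ p i * t k i / q k :=
        fun i => div_nonneg (mul_nonneg (hp0 i) (ht0 k i)) (hq k).le
      have hw1 : ∑ i, p i * t k i / q k = 1 := by
        rw [← Finset.sum_div, hsumt, div_self (hq k).ne']
      have hx : ∀ i, s k i ∈ SA := fun i => hsS k i
      have hsum : ∑ i, (p i * t k i / q k) • s k i = ψ k := by
        have : ∑ i, (p i * t k i / q k) • s k i
            = (q k)⁻¹ • ∑ i, (p i * t k i) • s k i := by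
          rw [Finset.smul_sum]
          exact Finset.sum_congr rfl fun i _ => by
            rw [smul_smul, div_eq_inv_mul]
        rw [this, hAν k, inv_smul_smul₀ (hq k).ne']
      have hs_eq : s k j = ψ k :=
        extreme_eq_of_convex_sum hSA (hψ k) _ _ hw0 hw1 hx hsum j
          (div_pos hpos (hq k))
      rw [hAe, smul_smul, hs_eq]
    · rw [hAe, smul_smul, ← hzero, zero_smul, zero_smul]
  -- define the conditional states
  refine ⟨fun k => ∑ j, (p j * t k j / q k) • τ j, ?_, ?_, ?_⟩
  · intro k
    refine hSB.sum_mem (fun i _ => div_nonneg (mul_nonneg (hp0 i) (ht0 k i)) (hq k).le)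
      ?_ (fun i _ => hτ i)
    rw [← Finset.sum_div, hsumt, div_self (hq k).ne']
  · -- the structure of ρ
    rw [← hnondistAB]
    refine Finset.sum_congr rfl fun k _ => ?_
    rw [map_sum]
    have lhs : ∀ j, TensorProduct.map (A k) LinearMap.id (p j • (ρJ j ⊗ₜ[ℝ] τ j))
        = (p j * t k j) • (ψ k ⊗ₜ[ℝ] τ j) := by
      intro j
      rw [map_smul, TensorProduct.map_tmul, LinearMap.id_apply,
        TensorProduct.smul_tmul', key k j]
      exact (TensorProduct.smul_tmul' _ _ _).symm
    rw [Finset.sum_congr rfl fun j _ => lhs j, TensorProduct.tmul_sum,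
      Finset.smul_sum]
    refine Finset.sum_congr rfl fun j _ => ?_
    rw [TensorProduct.tmul_smul, smul_smul, mul_div_cancel₀ _ (hq k).ne']
  · -- perfect distinguishability
    intro k k'
    have hψeq : ψ k' = (q k')⁻¹ • A k' ν := by
      rw [hmarg k', inv_smul_smul₀ (hq k').ne']
    have : A k (ψ k') = (q k')⁻¹ • ((A k ∘ₗ A k') ν) := by
      rw [hψeq, map_smul]; rfl
    rw [LinearMap.comp_apply, this, hrep]
    by_cases h : k = k'
    · subst h
      rw [if_pos rfl, if_pos rfl, hmarg k, inv_smul_smul₀ (hq k).ne', heA _ (hψ k).1]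
    · rw [if_neg h, if_neg h]
      simp
end

section
/- Let V_A and V_B be finite-dimensional real vector spaces. Let Z and X be finite index sets, p_i > 0 real numbers, ρ_i, ψ_k ∈ V_A, τ_i, σ_k ∈ V_B, q_k real numbers, and suppose: (i) ∑_{i∈Z} p_i (ρ_i ⊗ τ_i) = ∑_{k∈X} q_k (ψ_k ⊗ σ_k) in V_A ⊗ V_B; (ii) the family (τ_i)_{i∈Z} is linearly independent; (iii) there are linear functionals (a_k)_{k∈X} on V_A with a_k(ψ_{k'}) = δ_{kk'}. Then for every i ∈ Z, ρ_i = ∑_{k∈X} a_k(ρ_i) • ψ_k. -/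
open scoped TensorProduct

/-- central intermediate claim in the proof of Theorem 5 of the
paper. If a separable state `∑ i, p i • (ρ i ⊗ τ i)` with `p i > 0` and linearly
independent `(τ i)` also admits a null-discord decomposition
`∑ k, q k • (ψ k ⊗ σ k)` over states `ψ k` distinguished by effects `a k`
(`a k (ψ k') = δ_{kk'}`), then each `ρ i` is the linear combination
`∑ k, a k (ρ i) • ψ k`. -/
theorem local_states_decompose_over_pure_states
    {VA VB : Type*}
    [AddCommGroup VA] [Module ℝ VA] [FiniteDimensional ℝ VA]
    [AddCommGroup VB] [Module ℝ VB] [FiniteDimensional ℝ VB]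
    {Z X : Type*} [Fintype Z] [Fintype X] [DecidableEq X]
    (p : Z → ℝ) (hp : ∀ i, 0 < p i)
    (q : X → ℝ)
    (ρ : Z → VA) (ψ : X → VA)
    (τ : Z → VB) (σ : X → VB)
    (heq : ∑ i, p i • (ρ i ⊗ₜ[ℝ] τ i) = ∑ k, q k • (ψ k ⊗ₜ[ℝ] σ k))
    (hτ : LinearIndependent ℝ τ)
    (a : X → (VA →ₗ[ℝ] ℝ))
    (ha : ∀ k k', a k (ψ k') = if k = k' then 1 else 0) :
    ∀ i, ρ i = ∑ k, a k (ρ i) • ψ k := by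
  -- projection P x = ∑ k, a k x • ψ k
  set P : VA →ₗ[ℝ] VA := ∑ k, (a k).smulRight (ψ k) with hP
  have hPapply : ∀ x, P x = ∑ k, a k x • ψ k := by
    intro x
    simp [hP, LinearMap.sum_apply]
  have hPψ : ∀ k, P (ψ k) = ψ k := by
    intro k
    rw [hPapply]
    simp [ha, eq_comm]
  set L : VA →ₗ[ℝ] VA := LinearMap.id - P with hL
  -- apply L ⊗ id to heq
  have h0 : ∑ i, (p i • L (ρ i)) ⊗ₜ[ℝ] τ i = 0 := by
    have := congrArg (LinearMap.rTensor VB L) heq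
    simp only [map_sum, map_smul, LinearMap.rTensor_tmul] at this
    have hRHS : ∀ k, L (ψ k) = 0 := by
      intro k
      simp [hL, hPψ k]
    calc ∑ i, (p i • L (ρ i)) ⊗ₜ[ℝ] τ i
        = ∑ i, p i • (L (ρ i) ⊗ₜ[ℝ] τ i) := by
          simp [TensorProduct.smul_tmul']
      _ = ∑ k, q k • ((L (ψ k)) ⊗ₜ[ℝ] σ k) := this
      _ = 0 := by simp [hRHS]
  -- each coefficient vanishes against every dual functional
  have hLρ : ∀ i, L (ρ i) = 0 := by
    intro i
    rw [← Module.forall_dual_apply_eq_zero_iff ℝ]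
    intro f
    have := congrArg ((TensorProduct.lid ℝ VB).toLinearMap.comp
      (LinearMap.rTensor VB f)) h0
    simp only [map_sum, LinearMap.comp_apply, LinearMap.rTensor_tmul,
      LinearEquiv.coe_coe, TensorProduct.lid_tmul, map_zero] at this
    have hcoef := Fintype.linearIndependent_iff.mp hτ _ this i
    have : f (L (ρ i)) * p i = 0 := by
      have := hcoef
      simp only [map_smul, smul_eq_mul] at this
      linarith [this]
    rcases mul_eq_zero.mp this with h | h
    · exact h
    · exact absurd h (ne_of_gt (hp i))
  intro i
  have := hLρ i
  simp only [hL, LinearMap.sub_apply, LinearMap.id_apply, sub_eq_zero] at this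
  exact this.trans (hPapply _)
end

section
/- Let d_A, d_B be positive natural numbers, let (v_k)_{k=1}^{d_A} be an orthonormal basis of ℂ^{d_A}, and let Π_k denote the d_A × d_A matrix of the rank-one orthogonal projection onto v_k (so Π_k = v_k v_k†, Π_k Π_{k'} = δ_{kk'} Π_k, and ∑_k Π_k = I). Let ρ be a positive semidefinite (d_A·d_B) × (d_A·d_B) complex matrix with trace 1, regarded as a matrix on the Kronecker product ℂ^{d_A} ⊗ ℂ^{d_B}. Then ∑_{k=1}^{d_A} (Π_k ⊗ I_{d_B}) ρ (Π_k ⊗ I_{d_B}) = ρ if and only if there exist nonnegative reals (p_k)_{k=1}^{d_A} with ∑_k p_k = 1 and positive semidefinite d_B × d_B matrices σ_k with trace 1 such that ρ = ∑_{k=1}^{d_A} p_k (Π_k ⊗ σ_k), where ⊗ denotes the Kronecker product of matrices. -/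
open Matrix
open scoped Kronecker ComplexOrder

section Aux

lemma aux_psd_diag_nonneg {n : Type*} [Fintype n] [DecidableEq n] {M : Matrix n n ℂ}
    (hM : M.PosSemidef) (i : n) : 0 ≤ M i i := by
  exact hM.diag_nonneg

lemma aux_trace_conjTranspose_mul_self_eq_zero {m n : Type*} [Fintype m] [Fintype n]
    [DecidableEq n] {A : Matrix m n ℂ} (h : (Aᴴ * A).trace = 0) : A = 0 := by
  have hre : (∑ j, ∑ i, Complex.normSq (A i j) : ℝ) = 0 := by
    have : (Aᴴ * A).trace = ((∑ j, ∑ i, Complex.normSq (A i j) : ℝ) : ℂ) := by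
      simp [Matrix.trace, Matrix.diag, Matrix.mul_apply, Matrix.conjTranspose_apply,
        Complex.normSq_eq_conj_mul_self]
    rw [this] at h
    exact_mod_cast h
  ext i j
  have h1 : ∀ j ∈ Finset.univ, (0:ℝ) ≤ ∑ i, Complex.normSq (A i j) :=
    fun j _ => Finset.sum_nonneg fun i _ => Complex.normSq_nonneg _
  have h2 := (Finset.sum_eq_zero_iff_of_nonneg h1).mp hre j (Finset.mem_univ j)
  have h3 := (Finset.sum_eq_zero_iff_of_nonneg
    (fun i _ => Complex.normSq_nonneg (A i j))).mp h2 i (Finset.mem_univ i)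
  simpa using Complex.normSq_eq_zero.mp h3

lemma aux_psd_eq_zero_of_trace_eq_zero {n : Type*} [Fintype n] [DecidableEq n]
    {M : Matrix n n ℂ} (hM : M.PosSemidef) (h : M.trace = 0) : M = 0 := by
  exact hM.trace_eq_zero_iff.mp h

lemma aux_psd_smul {n : Type*} [Fintype n] [DecidableEq n] {M : Matrix n n ℂ}
    (hM : M.PosSemidef) {r : ℝ} (hr : 0 ≤ r) : ((r : ℂ) • M).PosSemidef := by
  refine PosSemidef.of_dotProduct_mulVec_nonneg ?_ ?_
  · show ((r : ℂ) • M)ᴴ = (r : ℂ) • M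
    rw [Matrix.conjTranspose_smul, hM.1.eq]
    simp [Complex.conj_ofReal]
  · intro x
    rw [smul_mulVec, dotProduct_smul, smul_eq_mul]
    exact mul_nonneg (by exact_mod_cast Complex.zero_le_real.mpr hr) (hM.dotProduct_mulVec_nonneg x)

lemma aux_blockA {dA dB : ℕ} (v : Fin dA → Fin dA → ℂ)
    (P : Fin dA → Matrix (Fin dA) (Fin dA) ℂ)
    (hP : ∀ k i j, P k i j = v k i * (starRingEnd ℂ) (v k j))
    (ρ : Matrix (Fin dA × Fin dB) (Fin dA × Fin dB) ℂ) (k : Fin dA) :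
    (P k ⊗ₖ (1 : Matrix (Fin dB) (Fin dB) ℂ)) * ρ * (P k ⊗ₖ (1 : Matrix (Fin dB) (Fin dB) ℂ))
      = P k ⊗ₖ (Matrix.of fun i j =>
          ∑ a, ∑ b, (starRingEnd ℂ) (v k a) * ρ (a,i) (b,j) * v k b) := by
  ext ⟨a,i⟩ ⟨b,j⟩
  simp only [Matrix.mul_apply, kroneckerMap_apply, Matrix.one_apply, Fintype.sum_prod_type,
    Matrix.of_apply, hP, mul_ite, ite_mul, mul_zero, zero_mul, mul_one, one_mul,
    Finset.sum_ite_eq, Finset.sum_ite_eq', Finset.mem_univ, if_true]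
  simp only [Finset.mul_sum, Finset.sum_mul]
  rw [Finset.sum_comm]
  refine Finset.sum_congr rfl fun a' _ => ?_
  refine Finset.sum_congr rfl fun b' _ => ?_
  ring

lemma aux_sigma_psd {dA dB : ℕ} (v : Fin dA → Fin dA → ℂ)
    (ρ : Matrix (Fin dA × Fin dB) (Fin dA × Fin dB) ℂ) (hρ : ρ.PosSemidef) (k : Fin dA) :
    (Matrix.of fun i j =>
        ∑ a, ∑ b, (starRingEnd ℂ) (v k a) * ρ (a,i) (b,j) * v k b).PosSemidef := by
  have key : (Matrix.of fun i j : Fin dB =>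
      ∑ a, ∑ b, (starRingEnd ℂ) (v k a) * ρ (a,i) (b,j) * v k b)
      = (Matrix.of fun (i : Fin dB) (x : Fin dA × Fin dB) =>
          (starRingEnd ℂ) (v k x.1) * (if x.2 = i then 1 else 0)) * ρ *
        (Matrix.of fun (i : Fin dB) (x : Fin dA × Fin dB) =>
          (starRingEnd ℂ) (v k x.1) * (if x.2 = i then 1 else 0))ᴴ := by
    ext i j
    simp only [Matrix.mul_apply, Matrix.of_apply, Matrix.conjTranspose_apply,
      Fintype.sum_prod_type, mul_ite, ite_mul, mul_zero, zero_mul, mul_one, one_mul,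
      apply_ite star, star_zero, RCLike.star_def, starRingEnd_self_apply,
      Finset.sum_ite_eq, Finset.sum_ite_eq', Finset.mem_univ, if_true]
    simp only [Finset.mul_sum, Finset.sum_mul]
    rw [Finset.sum_comm]
  rw [key]
  exact hρ.mul_mul_conjTranspose_same _

lemma aux_ortho {dA : ℕ} (v : OrthonormalBasis (Fin dA) ℂ (EuclideanSpace ℂ (Fin dA)))
    (k l : Fin dA) :
    ∑ a, (starRingEnd ℂ) (v k a) * v l a = if k = l then 1 else 0 := by
  have := v.orthonormal
  rw [orthonormal_iff_ite] at this
  have h := this k l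
  rw [PiLp.inner_apply] at h
  simpa only [RCLike.inner_apply'] using h

lemma aux_complete {dA : ℕ} (v : OrthonormalBasis (Fin dA) ℂ (EuclideanSpace ℂ (Fin dA)))
    (a b : Fin dA) :
    ∑ k, v k a * (starRingEnd ℂ) (v k b) = if a = b then 1 else 0 := by
  set U : Matrix (Fin dA) (Fin dA) ℂ := Matrix.of fun k a => (starRingEnd ℂ) (v k a) with hU
  have h1 : U * Uᴴ = 1 := by
    ext k l
    simp only [Matrix.mul_apply, Matrix.conjTranspose_apply, hU, Matrix.of_apply,
      RCLike.star_def, starRingEnd_self_apply, Matrix.one_apply]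
    simpa using aux_ortho v k l
  have h2 : Uᴴ * U = 1 := mul_eq_one_comm.mp h1
  have h3 := congrFun (congrFun h2 a) b
  simp only [Matrix.mul_apply, Matrix.conjTranspose_apply, hU, Matrix.of_apply,
    RCLike.star_def, starRingEnd_self_apply, Matrix.one_apply] at h3
  rw [← h3]

end Aux

/-- null discord condition in quantum theory, cf. Theorem 1 of the
paper. Let `(v k)` be an orthonormal basis of `ℂ^{d_A}` and `P k = |v k⟩⟨v k|` the
associated rank-one projection matrices. A bipartite quantum state `ρ` (positive
semidefinite, trace one, on `ℂ^{d_A} ⊗ ℂ^{d_B}`) satisfies the invariance condition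
`∑ k, (P k ⊗ I) ρ (P k ⊗ I) = ρ` if and only if it has the null-discord form
`ρ = ∑ k, p k • (P k ⊗ σ k)` for a probability distribution `(p k)` and quantum
states `σ k` of system `B`. -/
theorem quantum_null_discord_iff
    (dA dB : ℕ) (hdA : 0 < dA) (hdB : 0 < dB)
    (v : OrthonormalBasis (Fin dA) ℂ (EuclideanSpace ℂ (Fin dA)))
    (P : Fin dA → Matrix (Fin dA) (Fin dA) ℂ)
    (hP : ∀ k i j, P k i j = v k i * (starRingEnd ℂ) (v k j))
    (ρ : Matrix (Fin dA × Fin dB) (Fin dA × Fin dB) ℂ)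
    (hρ : ρ.PosSemidef) (hρtr : ρ.trace = 1) :
    (∑ k, (P k ⊗ₖ (1 : Matrix (Fin dB) (Fin dB) ℂ)) * ρ *
        (P k ⊗ₖ (1 : Matrix (Fin dB) (Fin dB) ℂ)) = ρ) ↔
      ∃ (p : Fin dA → ℝ) (σ : Fin dA → Matrix (Fin dB) (Fin dB) ℂ),
        (∀ k, 0 ≤ p k) ∧ (∑ k, p k = 1) ∧
        (∀ k, (σ k).PosSemidef ∧ (σ k).trace = 1) ∧
        ρ = ∑ k, (p k : ℂ) • (P k ⊗ₖ σ k) := by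
  have hPmul : ∀ k l, P k * P l = if k = l then P k else 0 := by
    intro k l
    ext i j
    have step : ∑ c, P k i c * P l c j
        = (v k i * (starRingEnd ℂ) (v l j)) * ∑ c, (starRingEnd ℂ) (v k c) * v l c := by
      rw [Finset.mul_sum]
      refine Finset.sum_congr rfl fun c _ => ?_
      simp only [hP]; ring
    rw [Matrix.mul_apply, step, aux_ortho v k l]
    by_cases h : k = l <;> simp [h, hP]
  have htrP : ∀ k, (P k).trace = 1 := by
    intro k
    have : (P k).trace = ∑ a, (starRingEnd ℂ) (v k a) * v k a := by
      simp only [Matrix.trace, Matrix.diag, hP]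
      exact Finset.sum_congr rfl fun a _ => by ring
    rw [this, aux_ortho v k k, if_pos rfl]
  constructor
  · intro hInv
    set σ' : Fin dA → Matrix (Fin dB) (Fin dB) ℂ := fun k => Matrix.of fun i j =>
      ∑ a, ∑ b, (starRingEnd ℂ) (v k a) * ρ (a,i) (b,j) * v k b with hσ'
    have hρeq : ρ = ∑ k, P k ⊗ₖ σ' k := by
      rw [← hInv]
      exact Finset.sum_congr rfl fun k _ => aux_blockA (fun k a => v k a) P hP ρ k
    have hpsd : ∀ k, (σ' k).PosSemidef := fun k => aux_sigma_psd (fun k a => v k a) ρ hρ k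
    have htr_nonneg : ∀ k, 0 ≤ (σ' k).trace := fun k =>
      Finset.sum_nonneg fun i _ => aux_psd_diag_nonneg (hpsd k) i
    set p : Fin dA → ℝ := fun k => ((σ' k).trace).re with hpdef
    have hptr : ∀ k, (σ' k).trace = (p k : ℂ) := by
      intro k
      have h := htr_nonneg k
      rw [Complex.le_def] at h
      exact Complex.ext rfl (by simpa using h.2.symm)
    have hp0 : ∀ k, 0 ≤ p k := by
      intro k
      have h := htr_nonneg k
      rw [Complex.le_def] at h
      simpa using h.1
    have hsumC : (∑ k, (p k : ℂ)) = 1 := by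
      calc (∑ k, (p k : ℂ)) = ∑ k, (σ' k).trace := by
            exact Finset.sum_congr rfl fun k _ => (hptr k).symm
        _ = (∑ k, P k ⊗ₖ σ' k).trace := by
            rw [Matrix.trace_sum]
            exact Finset.sum_congr rfl fun k _ => by
              rw [Matrix.trace_kronecker, htrP k, one_mul]
        _ = ρ.trace := by rw [← hρeq]
        _ = 1 := hρtr
    have hsum : ∑ k, p k = 1 := by exact_mod_cast hsumC
    refine ⟨p, fun k => if p k = 0 then
        (Complex.ofReal ((dB : ℝ)⁻¹)) • (1 : Matrix (Fin dB) (Fin dB) ℂ)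
      else (Complex.ofReal ((p k)⁻¹)) • σ' k, hp0, hsum, ?_, ?_⟩
    · intro k
      by_cases h : p k = 0
      · simp only [if_pos h]
        constructor
        · exact aux_psd_smul Matrix.PosSemidef.one (by positivity)
        · have hdB' : (dB : ℝ) ≠ 0 := by exact_mod_cast hdB.ne'
          rw [Matrix.trace_smul, Matrix.trace_one, smul_eq_mul]
          rw [show ((Fintype.card (Fin dB) : ℂ)) = ((dB : ℝ) : ℂ) by push_cast; simp]
          rw [← Complex.ofReal_mul, inv_mul_cancel₀ hdB', Complex.ofReal_one]
      · simp only [if_neg h]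
        constructor
        · exact aux_psd_smul (hpsd k) (inv_nonneg.mpr (hp0 k))
        · rw [Matrix.trace_smul, hptr k, smul_eq_mul,
            ← Complex.ofReal_mul, inv_mul_cancel₀ h, Complex.ofReal_one]
    · rw [hρeq]
      refine Finset.sum_congr rfl fun k _ => ?_
      by_cases h : p k = 0
      · have hz : σ' k = 0 := by
          refine aux_psd_eq_zero_of_trace_eq_zero (hpsd k) ?_
          rw [hptr k, h, Complex.ofReal_zero]
        simp only [if_pos h, h, hz, Matrix.kronecker_zero, Complex.ofReal_zero, zero_smul]
      · simp only [if_neg h]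
        rw [Matrix.kronecker_smul, smul_smul, ← Complex.ofReal_mul,
          mul_inv_cancel₀ h, Complex.ofReal_one, one_smul]
  · rintro ⟨p, σ, hp0, hsum, hσ, heq⟩
    rw [heq]
    calc ∑ k, (P k ⊗ₖ (1 : Matrix (Fin dB) (Fin dB) ℂ)) *
          (∑ l, (p l : ℂ) • (P l ⊗ₖ σ l)) * (P k ⊗ₖ (1 : Matrix (Fin dB) (Fin dB) ℂ))
        = ∑ k, ∑ l, (p l : ℂ) • ((if k = l then P k else 0) ⊗ₖ σ l) := by
          refine Finset.sum_congr rfl fun k _ => ?_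
          rw [Finset.mul_sum, Finset.sum_mul]
          refine Finset.sum_congr rfl fun l _ => ?_
          rw [Matrix.mul_smul, Matrix.smul_mul]
          congr 1
          rw [← Matrix.mul_kronecker_mul, ← Matrix.mul_kronecker_mul, Matrix.one_mul,
            Matrix.mul_one, hPmul k l]
          by_cases h : k = l <;> simp [h, hPmul]
      _ = ∑ l, (p l : ℂ) • (P l ⊗ₖ σ l) := by
          rw [Finset.sum_comm]
          refine Finset.sum_congr rfl fun l _ => ?_
          rw [Finset.sum_eq_single l]
          · rw [if_pos rfl]
          · intro k _ hk
            rw [if_neg hk, Matrix.zero_kronecker, smul_zero]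
          · intro h
            exact absurd (Finset.mem_univ l) h
end
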